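/- Any set P of n = (r-1)(d+1)+1 points in R^d can be partitioned into r sets P1, ..., Pr such that the intersection of the convex hulls ch(P1), ..., ch(Pr) is nonempty. -/

import Mathlib

open Finset RealInnerProductSpace

/-- Extract index-based convex weights from membership in the convex hull of a range. -/
lemma exists_weights_of_mem_range_hull {E : Type*} [AddCommGroup E] [Module ℝ E]
    {ι : Type*} [Fintype ι] [DecidableEq ι] {x : ι → E} {p : E}
    (h : p ∈ convexHull ℝ (Set.range x)) :
    ∃ w : ι → ℝ, (∀ j, 0 ≤ w j) ∧ ∑ j, w j = 1 ∧ ∑ j, w j • x j = p := by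
  obtain ⟨κ, _, ω, z, hω, hsum, hz, hcomb⟩ := mem_convexHull_iff_exists_fintype.mp h
  choose c hc using fun i => (hz i)
  refine ⟨fun j => ∑ i ∈ Finset.univ.filter (fun i => c i = j), ω i, ?_, ?_, ?_⟩
  · intro j; exact Finset.sum_nonneg fun i _ => hω i
  · rw [← hsum]; exact Finset.sum_fiberwise _ _ _
  · rw [← hcomb, ← Finset.sum_fiberwise Finset.univ c (fun i => ω i • z i)]
    refine Finset.sum_congr rfl fun j _ => ?_
    rw [Finset.sum_smul]
    refine Finset.sum_congr rfl fun i hi => ?_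
    simp only [Finset.mem_filter] at hi
    rw [← hi.2, hc]

/-- An affinely independent family lying in a hyperplane has at most `finrank E` points. -/
lemma card_le_finrank_of_inner_eq {E : Type*} [NormedAddCommGroup E] [InnerProductSpace ℝ E]
    [FiniteDimensional ℝ E] {ι : Type*} [Fintype ι] {z : ι → E} {p : E} (hp : p ≠ 0) {cst : ℝ}
    (hz : AffineIndependent ℝ z) (hmem : ∀ i, ⟪p, z i⟫ = cst) :
    Fintype.card ι ≤ Module.finrank ℝ E := by
  classical
  rcases isEmpty_or_nonempty ι with h | h
  · simp [Fintype.card_eq_zero]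
  obtain ⟨i₀⟩ := h
  set φ : E →ₗ[ℝ] ℝ := (innerSL ℝ p).toLinearMap with hφ
  have hli : LinearIndependent ℝ (fun i : {i // i ≠ i₀} => z ↑i - z i₀) := by
    have := (affineIndependent_iff_linearIndependent_vsub ℝ z i₀).mp hz
    simpa [vsub_eq_sub] using this
  have hker : ∀ i : {i // i ≠ i₀}, z ↑i - z i₀ ∈ LinearMap.ker φ := by
    intro i
    simp only [LinearMap.mem_ker, hφ, ContinuousLinearMap.coe_coe, innerSL_apply_apply]
    simp only [innerSL_apply_apply, inner_sub_right, hmem, sub_self]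
  have hli' : LinearIndependent ℝ
      (fun i : {i // i ≠ i₀} => (⟨z ↑i - z i₀, hker i⟩ : LinearMap.ker φ)) := by
    apply LinearIndependent.of_comp (LinearMap.ker φ).subtype
    exact hli
  have hcard : Fintype.card {i // i ≠ i₀} ≤ Module.finrank ℝ (LinearMap.ker φ) :=
    hli'.fintype_card_le_finrank
  have hrange : LinearMap.range φ = ⊤ := by
    rw [LinearMap.range_eq_top]
    intro r
    refine ⟨(r / ⟪p, p⟫) • p, ?_⟩
    have hpp : ⟪p, p⟫ ≠ 0 := by
      simpa using (inner_self_ne_zero (𝕜 := ℝ)).mpr hp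
    simp [hφ, real_inner_smul_left, div_mul_cancel₀, hpp, hp]
  have hdim := LinearMap.finrank_range_add_finrank_ker φ
  rw [hrange] at hdim
  simp only [finrank_top, Module.finrank_self] at hdim
  have hE : 1 ≤ Module.finrank ℝ E := by
    have : Nontrivial E := ⟨p, 0, hp⟩
    exact Module.finrank_pos
  have hsub : Fintype.card {i // i ≠ i₀} = Fintype.card ι - 1 := by
    have h1 := Fintype.card_subtype_compl (fun i : ι => i = i₀)
    have h2 := Fintype.card_subtype_eq i₀
    simp only [h2] at h1
    convert h1 using 2
  omega

/-- Bárány's colorful Carathéodory theorem (for the origin). -/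
theorem colorful_caratheodory {E : Type*} [NormedAddCommGroup E] [InnerProductSpace ℝ E]
    [FiniteDimensional ℝ E] {ι : Type*} [Fintype ι] [DecidableEq ι]
    (hcard : Fintype.card ι = Module.finrank ℝ E + 1)
    (C : ι → Finset E) (hC : ∀ j, (0:E) ∈ convexHull ℝ (C j : Set E)) :
    ∃ x : ι → E, (∀ j, x j ∈ C j) ∧ (0:E) ∈ convexHull ℝ (Set.range x) := by
  classical
  have hne : ∀ j, (C j).Nonempty := by
    intro j
    rw [← Finset.coe_nonempty, ← convexHull_nonempty_iff (𝕜 := ℝ)]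
    exact ⟨0, hC j⟩
  set T : Finset (ι → E) := Fintype.piFinset C with hT
  have hTne : T.Nonempty :=
    ⟨fun j => (hne j).choose, Fintype.mem_piFinset.2 fun j => (hne j).choose_spec⟩
  set g : (ι → E) → ℝ := fun x => Metric.infDist 0 (convexHull ℝ (Set.range x)) with hg
  obtain ⟨x, hxT, hxmin⟩ := T.exists_min_image g hTne
  have hxC : ∀ j, x j ∈ C j := Fintype.mem_piFinset.1 hxT
  refine ⟨x, hxC, ?_⟩
  set K : Set E := convexHull ℝ (Set.range x) with hK
  have hKcompact : IsCompact K := (Set.finite_range x).isCompact_convexHull ℝ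
  have hKconv : Convex ℝ K := convex_convexHull ℝ _
  have hιne : Nonempty ι := by
    rw [← Fintype.card_pos_iff]; omega
  have hKne : K.Nonempty := by
    rw [hK, convexHull_nonempty_iff]; exact Set.range_nonempty x
  by_contra h0
  have hgpos : 0 < g x := by
    rcases lt_or_eq_of_le (Metric.infDist_nonneg (s := K) (x := 0)) with h | h
    · exact h
    · exact absurd ((hKcompact.isClosed.mem_iff_infDist_zero hKne).2 h.symm) h0
  obtain ⟨p, hpK, hpnorm⟩ :=
    exists_norm_eq_iInf_of_complete_convex hKne hKcompact.isComplete hKconv 0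
  have hvar : ∀ w ∈ K, ⟪(0:E) - p, w - p⟫ ≤ 0 :=
    (norm_eq_iInf_iff_real_inner_le_zero hKconv hpK).1 hpnorm
  have hineq : ∀ w ∈ K, ⟪p, p⟫ ≤ ⟪p, w⟫ := by
    intro w hw
    have := hvar w hw
    rw [zero_sub, inner_neg_left, inner_sub_right] at this
    linarith
  have hgx : g x = ‖p‖ := by
    have h1 : Metric.infDist 0 K = ‖p‖ := by
      rw [Metric.infDist_eq_iInf]
      rw [show ‖p‖ = ‖(0:E) - p‖ by simp, hpnorm]
      congr 1
      ext w
      rw [dist_eq_norm]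
    exact h1
  have hppos : 0 < ‖p‖ := hgx ▸ hgpos
  have hpne : p ≠ 0 := by simpa using hppos.ne'
  have hpp : (0:ℝ) < ⟪p, p⟫ := by rw [real_inner_self_eq_norm_sq]; positivity
  obtain ⟨w, hw0, hw1, hwp⟩ := exists_weights_of_mem_range_hull hpK
  have hsupp : ∀ j, w j ≠ 0 → ⟪p, x j⟫ = ⟪p, p⟫ := by
    have hsum0 : ∑ j, w j * (⟪p, x j⟫ - ⟪p, p⟫) = 0 := by
      have h1 : ∑ j, w j * ⟪p, x j⟫ = ⟪p, p⟫ := by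
        rw [← hwp, inner_sum]
        simp [real_inner_smul_right]
      have h2 : ∑ j, w j * ⟪p, p⟫ = ⟪p, p⟫ := by
        rw [← Finset.sum_mul, hw1, one_mul]
      simp only [mul_sub, Finset.sum_sub_distrib, h1, h2, sub_self]
    have hterm : ∀ j ∈ Finset.univ, 0 ≤ w j * (⟪p, x j⟫ - ⟪p, p⟫) := by
      intro j _
      have hxj : x j ∈ K := subset_convexHull ℝ (Set.range x) ⟨j, rfl⟩
      exact mul_nonneg (hw0 j) (by linarith [hineq _ hxj])
    intro j hj
    have := (Finset.sum_eq_zero_iff_of_nonneg hterm).1 hsum0 j (Finset.mem_univ j)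
    rcases mul_eq_zero.1 this with h | h
    · exact absurd h hj
    · linarith
  set S : Finset ι := Finset.univ.filter (fun j => w j ≠ 0) with hS
  have hSsum : ∑ j ∈ S, w j = 1 := by
    rw [← hw1]
    exact Finset.sum_filter_ne_zero _
  have hpsum : ∑ j ∈ S, w j • x j = p := by
    rw [← hwp]
    apply Finset.sum_subset (Finset.subset_univ S)
    intro j _ hj
    simp only [hS, Finset.mem_filter, Finset.mem_univ, true_and, not_not] at hj
    rw [hj, zero_smul]
  have hpS : p ∈ convexHull ℝ (x '' ↑S) := by
    have hmem := Finset.centerMass_mem_convexHull (R := ℝ) S (w := w) (z := x)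
      (fun i _ => hw0 i) (by rw [hSsum]; norm_num) (fun i hi => Set.mem_image_of_mem x hi)
    rwa [Finset.centerMass_eq_of_sum_1 _ _ hSsum, hpsum] at hmem
  rw [convexHull_eq_union] at hpS
  simp only [Set.mem_iUnion] at hpS
  obtain ⟨t, hts, hai, hpt⟩ := hpS
  have htinner : ∀ y : ↥t, ⟪p, (y : E)⟫ = ⟪p, p⟫ := by
    intro y
    obtain ⟨j, hjS, hjx⟩ := hts y.2
    have hjw : w j ≠ 0 := by
      simpa [hS] using hjS
    rw [← hjx]
    exact hsupp j hjw
  have htcard : t.card ≤ Module.finrank ℝ E := by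
    have h := card_le_finrank_of_inner_eq hpne hai htinner
    simpa [Fintype.card_coe] using h
  have hselect : ∀ y : ↥t, ∃ j : ι, x j = (y : E) := by
    intro y
    obtain ⟨j, _, hjx⟩ := hts y.2
    exact ⟨j, hjx⟩
  choose ψ hψx using hselect
  obtain ⟨k, hk⟩ : ∃ k : ι, k ∉ Finset.univ.image ψ := by
    by_contra hc
    push_neg at hc
    have hsub : (Finset.univ : Finset ι) ⊆ Finset.univ.image ψ := fun k _ => hc k
    have h1 := Finset.card_le_card hsub
    have h2 : (Finset.univ.image ψ).card ≤ t.card := by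
      refine Finset.card_image_le.trans ?_
      simp [Finset.card_univ, Fintype.card_coe]
    rw [Finset.card_univ, hcard] at h1
    omega
  obtain ⟨y₀, hy₀C, hy₀⟩ : ∃ y₀ ∈ C k, ⟪p, y₀⟫ ≤ 0 := by
    by_contra hc
    push_neg at hc
    have hlin : IsLinearMap ℝ (fun v : E => ⟪p, v⟫) := by
      constructor <;> intros <;> simp [inner_add_right, real_inner_smul_right]
    have hconv : Convex ℝ {v : E | (0:ℝ) < ⟪p, v⟫} := convex_halfSpace_gt hlin 0
    have h0' : (0:E) ∈ {v : E | (0:ℝ) < ⟪p, v⟫} :=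
      convexHull_min (fun v hv => hc v hv) hconv (hC k)
    simpa using h0'
  set x' : ι → E := Function.update x k y₀ with hx'
  have hx'T : x' ∈ T := by
    refine Fintype.mem_piFinset.2 fun j => ?_
    rcases eq_or_ne j k with rfl | hjk
    · simpa [hx'] using hy₀C
    · simpa [hx', Function.update_of_ne hjk] using hxC j
  set K' : Set E := convexHull ℝ (Set.range x') with hK'
  have hpK' : p ∈ K' := by
    refine convexHull_mono ?_ hpt
    intro v hv
    have hvne : ψ ⟨v, hv⟩ ≠ k := by
      intro h
      exact hk (h ▸ Finset.mem_image_of_mem ψ (Finset.mem_univ (⟨v, hv⟩ : ↥t)))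
    refine ⟨ψ ⟨v, hv⟩, ?_⟩
    rw [hx', Function.update_of_ne hvne]
    exact hψx ⟨v, hv⟩
  have hy₀K' : y₀ ∈ K' :=
    subset_convexHull ℝ _ ⟨k, by rw [hx', Function.update_self]⟩
  have hipy : ⟪p, y₀ - p⟫ ≤ -⟪p, p⟫ := by
    rw [inner_sub_right]; linarith
  have hy₀p : y₀ - p ≠ 0 := by
    intro h
    rw [sub_eq_zero] at h
    rw [h] at hy₀
    linarith
  have hvpos : (0:ℝ) < ‖y₀ - p‖ ^ 2 := by
    have : ‖y₀ - p‖ ≠ 0 := norm_ne_zero_iff.2 hy₀p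
    positivity
  set τ : ℝ := min 1 (‖p‖ ^ 2 / ‖y₀ - p‖ ^ 2) with hτ
  have hτpos : 0 < τ := lt_min one_pos (by positivity)
  have hτ1 : τ ≤ 1 := min_le_left _ _
  set z : E := p + τ • (y₀ - p) with hz
  have hzK' : z ∈ K' := (convex_convexHull ℝ _).add_smul_sub_mem hpK' hy₀K' ⟨hτpos.le, hτ1⟩
  have hexp : ‖z‖ ^ 2 = ‖p‖ ^ 2 + 2 * (τ * ⟪p, y₀ - p⟫) + τ ^ 2 * ‖y₀ - p‖ ^ 2 := by
    rw [hz, norm_add_sq_real, real_inner_smul_right, norm_smul, Real.norm_eq_abs, mul_pow, sq_abs]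
  have hτb : τ * ‖y₀ - p‖ ^ 2 ≤ ‖p‖ ^ 2 := by
    rw [← le_div_iff₀ hvpos]
    exact min_le_right _ _
  have hppn : ⟪p, p⟫ = ‖p‖ ^ 2 := real_inner_self_eq_norm_sq p
  have hnz : ‖z‖ ^ 2 < ‖p‖ ^ 2 := by nlinarith
  have hzp : ‖z‖ < ‖p‖ := by nlinarith [norm_nonneg z, norm_nonneg p]
  have hgx' : g x' ≤ ‖z‖ := by
    have : Metric.infDist 0 K' ≤ dist 0 z := Metric.infDist_le_dist_of_mem hzK'
    rw [dist_eq_norm] at this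
    simpa using this
  have hmin := hxmin x' hx'T
  rw [hgx] at hmin
  linarith

lemma piLp_sum_apply {n : Type*} {α : Type*} (s : Finset α)
    (f : α → EuclideanSpace ℝ n) (i : n) : (∑ a ∈ s, f a) i = ∑ a ∈ s, f a i := by
  induction s using Finset.cons_induction with
  | empty => simp [PiLp.zero_apply]
  | cons a s ha ih => rw [Finset.sum_cons, Finset.sum_cons, PiLp.add_apply, ih]

/-- Tverberg's theorem. -/
theorem tverberg_theorem (d r : ℕ) [DecidableEq (EuclideanSpace ℝ (Fin d))] (hr : 1 ≤ r)
    (P : Finset (EuclideanSpace ℝ (Fin d)))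
    (hP : P.card = (r - 1) * (d + 1) + 1) :
    ∃ f : Fin r → Finset (EuclideanSpace ℝ (Fin d)),
      (∀ i, (f i).Nonempty) ∧
      (∀ i j, i ≠ j → Disjoint (f i) (f j)) ∧
      Finset.univ.biUnion f = P ∧
      ∃ x : EuclideanSpace ℝ (Fin d),
        ∀ i, x ∈ convexHull ℝ ((f i : Set (EuclideanSpace ℝ (Fin d)))) := by
  classical
  have hrpos : (0:ℝ) < r := by exact_mod_cast hr
  have hle : r - 1 ≤ r := Nat.sub_le r 1
  set lastc : Fin r := ⟨r - 1, by omega⟩ with hlastc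
  set v : Fin r → Fin (r - 1) → ℝ :=
    fun i l => (if i = Fin.castLE hle l then 1 else 0) - (if i = lastc then 1 else 0) with hv
  set bar : EuclideanSpace ℝ (Fin d) → Fin (d + 1) → ℝ :=
    fun a k => if h : (k : ℕ) < d then a ⟨k, h⟩ else 1 with hbar
  set u : Fin r → EuclideanSpace ℝ (Fin d) → EuclideanSpace ℝ (Fin (r - 1) × Fin (d + 1)) :=
    fun i a => WithLp.toLp 2 (fun lk : Fin (r - 1) × Fin (d + 1) => v i lk.1 * bar a lk.2) with hu
  -- sum of the v's vanishes
  have hvsum : ∀ l : Fin (r - 1), ∑ i : Fin r, v i l = 0 := by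
    intro l
    simp only [hv, Finset.sum_sub_distrib]
    rw [Fintype.sum_ite_eq' (Fin.castLE hle l) (fun _ => (1:ℝ)),
      Fintype.sum_ite_eq' lastc (fun _ => (1:ℝ)), sub_self]
  -- the color sets
  set C : {q // q ∈ P} → Finset (EuclideanSpace ℝ (Fin (r - 1) × Fin (d + 1))) :=
    fun a => Finset.univ.image (fun i => u i ↑a) with hC
  have husum : ∀ a : EuclideanSpace ℝ (Fin d), ∑ i : Fin r, u i a = 0 := by
    intro a
    ext lk
    rw [piLp_sum_apply]
    simp only [hu]
    rw [← Finset.sum_mul, hvsum lk.1, zero_mul]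
    rfl
  have hC0 : ∀ a, (0 : EuclideanSpace ℝ (Fin (r - 1) × Fin (d + 1))) ∈
      convexHull ℝ (C a : Set (EuclideanSpace ℝ (Fin (r - 1) × Fin (d + 1)))) := by
    intro a
    have hmem := Finset.centerMass_mem_convexHull (R := ℝ) (Finset.univ : Finset (Fin r))
      (w := fun _ => (1:ℝ)) (z := fun i => u i ↑a) (fun i _ => zero_le_one)
      (by simp [Finset.card_univ]; positivity)
      (fun i _ => Finset.mem_coe.2 (Finset.mem_image_of_mem (fun i => u i ↑a) (Finset.mem_univ i)))
    rwa [Finset.centerMass, show ∑ i : Fin r, (1:ℝ) • u i (↑a) = 0 by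
      simp only [one_smul]; exact husum ↑a, smul_zero] at hmem
  -- apply colorful Carathéodory
  have hcard : Fintype.card {q // q ∈ P} =
      Module.finrank ℝ (EuclideanSpace ℝ (Fin (r - 1) × Fin (d + 1))) + 1 := by
    rw [Fintype.card_coe, hP, finrank_euclideanSpace]
    simp
  obtain ⟨x, hxC, hx0⟩ := colorful_caratheodory hcard C hC0
  have hcol : ∀ a : {q // q ∈ P}, ∃ i : Fin r, u i ↑a = x a := by
    intro a
    have := hxC a
    simp only [hC, Finset.mem_image] at this
    obtain ⟨i, _, hi⟩ := this
    exact ⟨i, hi⟩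
  choose col hcol using hcol
  obtain ⟨w, hw0, hw1, hwsum⟩ := exists_weights_of_mem_range_hull hx0
  -- coordinate identities
  have hkey : ∀ (l : Fin (r - 1)) (k : Fin (d + 1)),
      ∑ a : {q // q ∈ P}, w a * (v (col a) l * bar ↑a k) = 0 := by
    intro l k
    have := congrArg (fun z : EuclideanSpace ℝ (Fin (r - 1) × Fin (d + 1)) => z (l, k)) hwsum
    have h1 : (∑ a : {q // q ∈ P}, w a • x a) (l, k) = 0 := by
      rw [hwsum]; rfl
    rw [piLp_sum_apply] at h1
    rw [← h1]
    refine Finset.sum_congr rfl fun a _ => ?_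
    rw [PiLp.smul_apply, smul_eq_mul, ← hcol a]
  set S : Fin r → Finset {q // q ∈ P} :=
    fun i => Finset.univ.filter (fun a => col a = i) with hS
  set F : Fin r → Fin (d + 1) → ℝ :=
    fun i k => ∑ a ∈ S i, w a * bar ↑a k with hF
  have hsplit : ∀ (l : Fin (r - 1)) (k : Fin (d + 1)),
      ∑ a : {q // q ∈ P}, w a * (v (col a) l * bar ↑a k)
        = F (Fin.castLE hle l) k - F lastc k := by
    intro l k
    simp only [hF, hS, Finset.sum_filter]
    rw [← Finset.sum_sub_distrib]
    refine Finset.sum_congr rfl fun a _ => ?_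
    simp only [hv]
    split_ifs <;> ring
  have hFeq : ∀ (i : Fin r) (k : Fin (d + 1)), F i k = F lastc k := by
    intro i k
    rcases eq_or_ne i lastc with rfl | hi
    · rfl
    · have hilt : (i : ℕ) < r - 1 := by
        have := i.2
        have : (i : ℕ) ≠ r - 1 := fun h => hi (Fin.ext h)
        omega
      have := hkey ⟨i, hilt⟩ k
      rw [hsplit] at this
      have hcast : Fin.castLE hle ⟨(i : ℕ), hilt⟩ = i := Fin.ext rfl
      rw [hcast] at this
      linarith
  -- weight sums
  have hbarlast : ∀ a : EuclideanSpace ℝ (Fin d), bar a ⟨d, by omega⟩ = 1 := by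
    intro a
    simp [hbar]
  have hsF : ∀ i : Fin r, ∑ a ∈ S i, w a = F i ⟨d, by omega⟩ := by
    intro i
    simp only [hF]
    refine Finset.sum_congr rfl fun a _ => ?_
    rw [hbarlast, mul_one]
  have hseq : ∀ i : Fin r, ∑ a ∈ S i, w a = ∑ a ∈ S lastc, w a := by
    intro i
    rw [hsF i, hsF lastc, hFeq]
  have htotal : ∑ i : Fin r, ∑ a ∈ S i, w a = 1 := by
    rw [← hw1]
    exact Finset.sum_fiberwise _ _ _
  have hrs : (r : ℝ) * ∑ a ∈ S lastc, w a = 1 := by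
    calc (r : ℝ) * ∑ a ∈ S lastc, w a = ∑ _i : Fin r, ∑ a ∈ S lastc, w a := by
          rw [Finset.sum_const, Finset.card_univ, Fintype.card_fin, nsmul_eq_mul]
      _ = ∑ i : Fin r, ∑ a ∈ S i, w a := Finset.sum_congr rfl fun i _ => (hseq i).symm
      _ = 1 := htotal
  have hsum1 : ∀ i : Fin r, (r : ℝ) * ∑ a ∈ S i, w a = 1 := by
    intro i; rw [hseq i]; exact hrs
  have hspos : ∀ i : Fin r, 0 < ∑ a ∈ S i, w a := by
    intro i
    have h := hsum1 i
    nlinarith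
  have hSne : ∀ i : Fin r, (S i).Nonempty := by
    intro i
    exact Finset.nonempty_of_sum_ne_zero (f := w) (hspos i).ne'
  -- the partition
  set f : Fin r → Finset (EuclideanSpace ℝ (Fin d)) :=
    fun i => (S i).image Subtype.val with hf
  -- coordinates of the points
  have hbarlt : ∀ (a : EuclideanSpace ℝ (Fin d)) (k : Fin d),
      bar a ⟨(k : ℕ), by omega⟩ = a k := by
    intro a k
    show (if h : ((⟨(k:ℕ), by omega⟩ : Fin (d+1)) : ℕ) < d then a ⟨_, h⟩ else 1) = a k
    rw [dif_pos (show ((⟨(k:ℕ), by omega⟩ : Fin (d+1)) : ℕ) < d from k.2)]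
  -- the common point is the same for each class
  have hvec : ∀ i : Fin r,
      ∑ a ∈ S i, w a • (↑a : EuclideanSpace ℝ (Fin d))
        = ∑ a ∈ S lastc, w a • (↑a : EuclideanSpace ℝ (Fin d)) := by
    intro i
    ext k
    rw [piLp_sum_apply, piLp_sum_apply]
    have h1 : ∀ j : Fin r, ∑ a ∈ S j, (w a • (↑a : EuclideanSpace ℝ (Fin d))) k
        = F j ⟨(k : ℕ), by omega⟩ := by
      intro j
      simp only [hF]
      refine Finset.sum_congr rfl fun a _ => ?_
      rw [PiLp.smul_apply, smul_eq_mul, hbarlt]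
    rw [h1, h1, hFeq]
  set x₀ : EuclideanSpace ℝ (Fin d) :=
    (r : ℝ) • ∑ a ∈ S lastc, w a • (↑a : EuclideanSpace ℝ (Fin d)) with hx₀
  refine ⟨f, ?_, ?_, ?_, x₀, ?_⟩
  · intro i
    exact ((hSne i).image _)
  · intro i j hij
    rw [Finset.disjoint_left]
    intro q hqi hqj
    simp only [hf, Finset.mem_image] at hqi hqj
    obtain ⟨a, hai, ha⟩ := hqi
    obtain ⟨b, hbj, hb⟩ := hqj
    have hab : a = b := Subtype.ext (by rw [ha, hb])
    simp only [hS, Finset.mem_filter] at hai hbj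
    exact hij (by rw [← hai.2, hab, hbj.2])
  · ext q
    simp only [Finset.mem_biUnion, Finset.mem_univ, true_and, hf, Finset.mem_image]
    constructor
    · rintro ⟨i, a, _, rfl⟩
      exact a.2
    · intro hq
      exact ⟨col ⟨q, hq⟩, ⟨q, hq⟩, by simp [hS], rfl⟩
  · intro i
    have hwsum1 : ∑ a ∈ S i, (r : ℝ) * w a = 1 := by
      rw [← Finset.mul_sum]
      exact hsum1 i
    have hmem := Finset.centerMass_mem_convexHull (R := ℝ) (S i)
      (w := fun a => (r : ℝ) * w a) (z := fun a => (↑a : EuclideanSpace ℝ (Fin d)))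
      (fun a _ => mul_nonneg hrpos.le (hw0 a)) (by rw [hwsum1]; norm_num)
      (fun a ha => Finset.mem_coe.2 (Finset.mem_image_of_mem _ ha))
    rwa [Finset.centerMass_eq_of_sum_1 _ _ hwsum1, show
      ∑ a ∈ S i, ((r:ℝ) * w a) • (↑a : EuclideanSpace ℝ (Fin d)) = x₀ from ?_] at hmem
    rw [hx₀, ← hvec i, Finset.smul_sum]
    refine Finset.sum_congr rfl fun a _ => ?_
    rw [smul_smul]
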